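/- arXiv:2103.01580 — 3 statements merged into one kernel-verified Lean document; each statement's English description precedes it below -/
import Mathlib

section
/- Let s_1, ..., s_n and t_1, ..., t_m be positive real numbers such that the sum of the s_i equals the sum of the t_j, and such that some pair of numbers among {s_1, ..., s_n, t_1, ..., t_m} has irrational ratio. Then there exist permutations of the s_i's and of the t_j's such that, after reordering, the equality s_1 + ... + s_k = t_1 + ... + t_l holds only for k = n and l = m. -/
open Finset

private lemma prefix_pos {n : ℕ} (c : Fin n → ℚ) (hanti : Antitone c)
    (hsum : ∑ i, c i = 0) (hne : ∃ i, c i ≠ 0) {k : ℕ} (hk1 : 1 ≤ k) (hkn : k < n) :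
    0 < ∑ i ∈ Finset.univ.filter (fun i : Fin n => (i : ℕ) < k), c i := by
  have hn0 : 0 < n := by omega
  have hc0 : 0 < c ⟨0, hn0⟩ := by
    by_contra h
    push_neg at h
    have hall : ∀ i ∈ Finset.univ, c i ≤ 0 := fun i _ =>
      le_trans (hanti (by simp [Fin.le_def])) h
    obtain ⟨i, hi⟩ := hne
    exact hi ((Finset.sum_eq_zero_iff_of_nonpos hall).mp hsum i (mem_univ i))
  rcases le_or_gt 0 (c ⟨k - 1, by omega⟩) with hpos | hneg
  · apply Finset.sum_pos'
    · intro i hi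
      have hik : (i : ℕ) < k := (Finset.mem_filter.mp hi).2
      exact le_trans hpos (hanti (by simp [Fin.le_def]; omega))
    · exact ⟨⟨0, hn0⟩, Finset.mem_filter.mpr ⟨mem_univ _, by simp; omega⟩, hc0⟩
  · have hsplit := Finset.sum_filter_add_sum_filter_not Finset.univ
      (fun i : Fin n => (i : ℕ) < k) c
    have hBneg : ∑ i ∈ Finset.univ.filter (fun i : Fin n => ¬ (i : ℕ) < k), c i < 0 := by
      apply Finset.sum_neg
      · intro i hi
        have hik : ¬ (i : ℕ) < k := (Finset.mem_filter.mp hi).2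
        exact lt_of_le_of_lt (hanti (by simp [Fin.le_def]; omega)) hneg
      · exact ⟨⟨k, hkn⟩, Finset.mem_filter.mpr ⟨mem_univ _, by simp⟩⟩
    rw [hsum] at hsplit
    linarith

private lemma exists_functional (T : ℝ) (W : Finset ℝ)
    (hW : ∀ v ∈ W, v ∉ Submodule.span ℚ ({T} : Set ℝ)) :
    ∃ f : ℝ →ₗ[ℚ] ℚ, f T = 0 ∧ ∀ v ∈ W, f v ≠ 0 := by
  classical
  induction W using Finset.induction with
  | empty => exact ⟨0, rfl, by simp⟩
  | @insert a W ha ih =>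
    obtain ⟨f, hfT, hf⟩ := ih (fun v hv => hW v (Finset.mem_insert_of_mem hv))
    set S := Submodule.span ℚ ({T} : Set ℝ) with hS
    have haS : a ∉ S := hW a (Finset.mem_insert_self a W)
    have hmk : S.mkQ a ≠ 0 := by
      rw [Submodule.mkQ_apply, Ne, Submodule.Quotient.mk_eq_zero]
      exact haS
    have hphi : ∃ φ : Module.Dual ℚ (ℝ ⧸ S), φ (S.mkQ a) ≠ 0 := by
      by_contra h
      push_neg at h
      exact hmk ((Module.forall_dual_apply_eq_zero_iff ℚ (S.mkQ a)).mp h)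
    obtain ⟨φ, hφ⟩ := hphi
    set g : ℝ →ₗ[ℚ] ℚ := φ.comp S.mkQ with hg
    have hgT : g T = 0 := by
      have : S.mkQ T = 0 := by
        rw [Submodule.mkQ_apply, Submodule.Quotient.mk_eq_zero]
        exact Submodule.mem_span_singleton_self T
      simp [hg, this]
    have hga : g a ≠ 0 := hφ
    obtain ⟨q, hq⟩ := Infinite.exists_notMem_finset
      ((insert a W).image (fun u => -(f u) / (g u)))
    refine ⟨f + q • g, by simp [hfT, hgT], ?_⟩
    intro v hv
    simp only [LinearMap.add_apply, LinearMap.smul_apply, smul_eq_mul]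
    rcases eq_or_ne (g v) 0 with hgv | hgv
    · rcases Finset.mem_insert.mp hv with rfl | hvW
      · exact absurd hgv hga
      · simpa [hgv] using hf v hvW
    · intro hcon
      apply hq
      apply Finset.mem_image.mpr
      refine ⟨v, hv, ?_⟩
      field_simp
      linarith
/-- Lemma on reordering two families of positive reals with equal sums and some
pair of irrational ratio, so that no proper initial partial sums coincide. -/
theorem reorder_partial_sums_ne
    (n m : ℕ) (s : Fin n → ℝ) (t : Fin m → ℝ)
    (hs : ∀ i, 0 < s i) (ht : ∀ j, 0 < t j)
    (hsum : ∑ i, s i = ∑ j, t j)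
    (hirr : ∃ x ∈ Set.range s ∪ Set.range t, ∃ y ∈ Set.range s ∪ Set.range t,
      Irrational (x / y)) :
    ∃ σ : Equiv.Perm (Fin n), ∃ τ : Equiv.Perm (Fin m),
      ∀ k l : ℕ, 1 ≤ k → k ≤ n → 1 ≤ l → l ≤ m →
        (∑ i ∈ Finset.univ.filter (fun i : Fin n => (i : ℕ) < k), s (σ i)) =
          (∑ j ∈ Finset.univ.filter (fun j : Fin m => (j : ℕ) < l), t (τ j)) →
        k = n ∧ l = m := by
  classical
  rcases Nat.eq_zero_or_pos n with hn | hn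
  · exact ⟨1, 1, fun k l hk1 hkn hl1 hlm _ => absurd hkn (by omega)⟩
  rcases Nat.eq_zero_or_pos m with hm | hm
  · exact ⟨1, 1, fun k l hk1 hkn hl1 hlm _ => absurd hlm (by omega)⟩
  set T : ℝ := ∑ i, s i with hT
  have hT0 : 0 < T := Finset.sum_pos (fun i _ => hs i) ⟨⟨0, hn⟩, mem_univ _⟩
  set S := Submodule.span ℚ ({T} : Set ℝ) with hSdef
  set V : Finset ℝ := (Finset.univ.image s ∪ Finset.univ.image t) with hV
  obtain ⟨f, hfT, hf⟩ := exists_functional T (V.filter (fun v => v ∉ S))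
    (fun v hv => (Finset.mem_filter.mp hv).2)
  have hf' : ∀ v ∈ V, v ∉ S → f v ≠ 0 := fun v hv hvs =>
    hf v (Finset.mem_filter.mpr ⟨hv, hvs⟩)
  -- not both families entirely killed by f
  have hPQ : ¬ ((∀ i, f (s i) = 0) ∧ (∀ j, f (t j) = 0)) := by
    rintro ⟨hP, hQ⟩
    have hmem : ∀ x ∈ Set.range s ∪ Set.range t, ∃ a : ℚ, x = (a : ℝ) * T := by
      rintro x (⟨i, rfl⟩ | ⟨j, rfl⟩)
      · have : s i ∈ S := by
          by_contra hx
          exact hf' (s i) (Finset.mem_union_left _ (Finset.mem_image_of_mem s (mem_univ i))) hx (hP i)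
        obtain ⟨a, ha⟩ := Submodule.mem_span_singleton.mp this
        exact ⟨a, by rw [← ha]; simp [Rat.smul_def]⟩
      · have : t j ∈ S := by
          by_contra hx
          exact hf' (t j) (Finset.mem_union_right _ (Finset.mem_image_of_mem t (mem_univ j))) hx (hQ j)
        obtain ⟨a, ha⟩ := Submodule.mem_span_singleton.mp this
        exact ⟨a, by rw [← ha]; simp [Rat.smul_def]⟩
    obtain ⟨x, hx, y, hy, hxy⟩ := hirr
    obtain ⟨a, rfl⟩ := hmem x hx
    obtain ⟨b, rfl⟩ := hmem y hy
    have hy0 : (0:ℝ) < (b:ℝ) * T := by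
      rcases hy with ⟨j, hj⟩ | ⟨j, hj⟩
      · rw [← hj]; exact hs j
      · rw [← hj]; exact ht j
    have hb : (b:ℝ) ≠ 0 := by
      intro h; rw [h, zero_mul] at hy0; exact lt_irrefl 0 hy0
    have heq : ((a:ℝ) * T) / ((b:ℝ) * T) = ((a / b : ℚ) : ℝ) := by
      push_cast
      rw [mul_div_mul_right _ _ (ne_of_gt hT0)]
    rw [heq] at hxy
    exact (Rat.not_irrational _) hxy
  -- sorting permutations
  set σ : Equiv.Perm (Fin n) := Tuple.sort (fun i => -f (s i)) with hσ
  set τ : Equiv.Perm (Fin m) := Tuple.sort (fun j => f (t j)) with hτ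
  set c : Fin n → ℚ := fun i => f (s (σ i)) with hc
  set d : Fin m → ℚ := fun j => f (t (τ j)) with hd
  have hcanti : Antitone c := by
    intro i j hij
    have := Tuple.monotone_sort (fun i => -f (s i)) hij
    simpa [hc] using neg_le_neg_iff.mp this
  have hdmono : Monotone d := fun i j hij => Tuple.monotone_sort (fun j => f (t j)) hij
  have hsumc : ∑ i, c i = 0 := by
    have h1 : ∑ i, c i = ∑ i, f (s i) := Equiv.sum_comp σ (fun i => f (s i))
    rw [h1, ← map_sum, ← hT, hfT]
  have hsumd : ∑ j, d j = 0 := by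
    have h1 : ∑ j, d j = ∑ j, f (t j) := Equiv.sum_comp τ (fun j => f (t j))
    rw [h1, ← map_sum, ← hsum]; exact hfT
  refine ⟨σ, τ, ?_⟩
  intro k l hk1 hkn hl1 hlm heq
  rcases eq_or_lt_of_le hkn with hkn' | hkn'
  · rcases eq_or_lt_of_le hlm with hlm' | hlm'
    · exact ⟨hkn', hlm'⟩
    · -- k = n, l < m : LHS = T but RHS < T
      exfalso
      have hL : (∑ i ∈ Finset.univ.filter (fun i : Fin n => (i : ℕ) < k), s (σ i)) = T := by
        rw [hkn', Finset.filter_true_of_mem (fun i _ => i.isLt)]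
        rw [hT]
        exact Equiv.sum_comp σ s
      have hR : (∑ j ∈ Finset.univ.filter (fun j : Fin m => (j : ℕ) < l), t (τ j)) < T := by
        have h2 : (∑ j, t (τ j)) = T := by
          rw [hsum]; exact Equiv.sum_comp τ t
        rw [← h2]
        apply Finset.sum_lt_sum_of_subset (Finset.filter_subset _ _)
          (i := (⟨l, hlm'⟩ : Fin m)) (mem_univ _)
        · simp
        · exact ht _
        · intro j _ _; exact le_of_lt (ht _)
      rw [hL] at heq
      rw [heq] at hR
      exact lt_irrefl _ hR
  · rcases eq_or_lt_of_le hlm with hlm' | hlm'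
    · -- k < n, l = m : RHS = T but LHS < T
      exfalso
      have hR : (∑ j ∈ Finset.univ.filter (fun j : Fin m => (j : ℕ) < l), t (τ j)) = T := by
        rw [hlm', Finset.filter_true_of_mem (fun j _ => j.isLt), hsum]
        exact Equiv.sum_comp τ t
      have hL : (∑ i ∈ Finset.univ.filter (fun i : Fin n => (i : ℕ) < k), s (σ i)) < T := by
        have h2 : (∑ i, s (σ i)) = T := by rw [hT]; exact Equiv.sum_comp σ s
        rw [← h2]
        apply Finset.sum_lt_sum_of_subset (Finset.filter_subset _ _)
          (i := (⟨k, hkn'⟩ : Fin n)) (mem_univ _)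
        · simp
        · exact hs _
        · intro i _ _; exact le_of_lt (hs _)
      rw [hR] at heq
      rw [heq] at hL
      exact lt_irrefl _ hL
    · -- k < n, l < m : apply f
      exfalso
      have hfeq : (∑ i ∈ Finset.univ.filter (fun i : Fin n => (i : ℕ) < k), c i)
          = (∑ j ∈ Finset.univ.filter (fun j : Fin m => (j : ℕ) < l), d j) := by
        rw [hc, hd]
        simp only []
        rw [← map_sum, ← map_sum, heq]
      have hY : (∀ i, f (s i) = 0) ∨
          0 < ∑ i ∈ Finset.univ.filter (fun i : Fin n => (i : ℕ) < k), c i := by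
        rcases Classical.em (∀ i, f (s i) = 0) with hP | hP
        · exact Or.inl hP
        · right
          apply prefix_pos c hcanti hsumc _ hk1 hkn'
          push_neg at hP
          obtain ⟨i, hi⟩ := hP
          exact ⟨σ.symm i, by simpa [hc] using hi⟩
      have hY' : (∀ j, f (t j) = 0) ∨
          ∑ j ∈ Finset.univ.filter (fun j : Fin m => (j : ℕ) < l), d j < 0 := by
        rcases Classical.em (∀ j, f (t j) = 0) with hQ | hQ
        · exact Or.inl hQ
        · right
          have := prefix_pos (fun j => -d j) (fun a b hab => neg_le_neg (hdmono hab))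
            (by simp only [Finset.sum_neg_distrib, hsumd, neg_zero]) ?_ hl1 hlm'
          · simp only [Finset.sum_neg_distrib] at this
            linarith
          · push_neg at hQ
            obtain ⟨j, hj⟩ := hQ
            exact ⟨τ.symm j, by simpa [hd] using hj⟩
      rcases hY with hP | hY <;> rcases hY' with hQ | hY'
      · exact hPQ ⟨hP, hQ⟩
      · have : (∑ i ∈ Finset.univ.filter (fun i : Fin n => (i : ℕ) < k), c i) = 0 :=
          Finset.sum_eq_zero (fun i _ => by simp [hc, hP])
        rw [this] at hfeq
        linarith
      · have : (∑ j ∈ Finset.univ.filter (fun j : Fin m => (j : ℕ) < l), d j) = 0 :=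
          Finset.sum_eq_zero (fun j _ => by simp [hd, hQ])
        rw [this] at hfeq
        linarith
      · linarith
end

section
/- Let v be a nonzero vector in ℤ^{2g} whose entries have greatest common divisor 1 (a primitive integer vector). Then there exists a matrix A in the integral symplectic group Sp(2g, ℤ) such that A·v = (1, 1, ..., 1). -/
open Matrix

namespace SympAux

variable {g : ℕ}

abbrev V (g : ℕ) := (Fin g ⊕ Fin g) → ℤ

def Reach (v w : V g) : Prop :=
  ∃ M ∈ Matrix.symplecticGroup (Fin g) ℤ, M.mulVec v = w

lemma Reach.rfl (v : V g) : Reach v v := ⟨1, one_mem _, by simp⟩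

lemma Reach.trans {u v w : V g} (h1 : Reach u v) (h2 : Reach v w) : Reach u w := by
  obtain ⟨M, hM, rfl⟩ := h1
  obtain ⟨N, hN, rfl⟩ := h2
  exact ⟨N * M, mul_mem hN hM, by rw [← mulVec_mulVec]⟩

lemma Reach.symm {v w : V g} (h : Reach v w) : Reach w v := by
  obtain ⟨M, hM, rfl⟩ := h
  refine ⟨M⁻¹, ?_, ?_⟩
  · rw [SymplecticGroup.inv_eq_symplectic_inv M hM]
    exact mul_mem (mul_mem (SymplecticGroup.neg_mem (SymplecticGroup.J_mem _ _))
      (SymplecticGroup.transpose_mem hM)) (SymplecticGroup.J_mem _ _)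
  · rw [mulVec_mulVec, Matrix.nonsing_inv_mul M (SymplecticGroup.symplectic_det hM), one_mulVec]

lemma aux1 (u r : V g) (B : Matrix (Fin g ⊕ Fin g) (Fin g ⊕ Fin g) ℤ) :
    vecMulVec u r * B = vecMulVec u (r ᵥ* B) := by
  ext i j
  simp only [Matrix.mul_apply, vecMulVec_apply, Matrix.vecMul, dotProduct, Finset.mul_sum,
    mul_assoc]

lemma aux2 (B : Matrix (Fin g ⊕ Fin g) (Fin g ⊕ Fin g) ℤ) (r u : V g) :
    B * vecMulVec r u = vecMulVec (B *ᵥ r) u := by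
  ext i j
  simp only [Matrix.mul_apply, vecMulVec_apply, Matrix.mulVec, dotProduct, Finset.sum_mul,
    mul_assoc]

lemma aux3 (u r : V g) : (vecMulVec u r)ᵀ = vecMulVec r u := by
  ext i j
  simp [vecMulVec_apply, Matrix.transpose_apply, mul_comm]

lemma aux4 (a b c d : V g) :
    vecMulVec a b * vecMulVec c d = (b ⬝ᵥ c) • vecMulVec a d := by
  ext i j
  simp only [Matrix.mul_apply, vecMulVec_apply, Matrix.smul_apply, dotProduct, Finset.sum_mul,
    smul_eq_mul]
  apply Finset.sum_congr rfl
  intros; ring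

lemma aux5 (a b : V g) : vecMulVec (-a) b = -vecMulVec a b := by
  ext i j; simp [vecMulVec_apply]


lemma transvection_mem (u : V g) (c : ℤ) :
    (1 + c • vecMulVec u (Matrix.J (Fin g) ℤ *ᵥ u)) ∈ Matrix.symplecticGroup (Fin g) ℤ := by
  rw [SymplecticGroup.mem_iff]
  set Jm := Matrix.J (Fin g) ℤ with hJdef
  set r := Jm *ᵥ u with hrdef
  have hsq : Jm * Jm = -1 := Matrix.J_squared _ _
  have hJm : Jm = (-Jm)ᵀ := by rw [transpose_neg, hJdef, Matrix.J_transpose, neg_neg]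
  have h1 : r ᵥ* Jm = u := by
    rw [hJm, vecMul_transpose, neg_mulVec, hrdef, mulVec_mulVec, hsq,
      neg_mulVec, one_mulVec, neg_neg]
  have h2 : Jm *ᵥ r = -u := by
    rw [hrdef, mulVec_mulVec, hsq, neg_mulVec, one_mulVec]
  have h4 : u ᵥ* Jm = -r := by
    rw [hJm, vecMul_transpose, neg_mulVec, ← hrdef]
  have h3 : u ⬝ᵥ r = 0 := by
    have := dotProduct_mulVec u Jm u
    rw [← hrdef, h4] at this
    have h5 : (-r) ⬝ᵥ u = -(r ⬝ᵥ u) := by simp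
    rw [h5, dotProduct_comm r u] at this
    omega
  have hA : vecMulVec u r * Jm = vecMulVec u u := by rw [aux1, h1]
  have hB : Jm * vecMulVec r u = -vecMulVec u u := by rw [aux2, h2, aux5]
  have hC : vecMulVec u u * vecMulVec r u = (0 : Matrix _ _ ℤ) := by
    rw [aux4, h3, zero_smul]
  rw [transpose_add, transpose_one, transpose_smul, aux3, Matrix.add_mul, Matrix.one_mul,
    Matrix.smul_mul, hA, Matrix.mul_add, Matrix.mul_one, Matrix.add_mul, Matrix.mul_smul, hB,
    Matrix.smul_mul, Matrix.mul_smul, hC]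
  simp only [smul_zero, add_zero, smul_neg]
  abel

lemma vecMulVec_mulVec (u r v : V g) :
    vecMulVec u r *ᵥ v = fun i => u i * (r ⬝ᵥ v) := by
  funext i
  show ((u i) • r) ⬝ᵥ v = _
  rw [smul_dotProduct, smul_eq_mul]

lemma transvection_mulVec (u : V g) (c : ℤ) (v : V g) :
    (1 + c • vecMulVec u (Matrix.J (Fin g) ℤ *ᵥ u)) *ᵥ v
      = fun i => v i + c * ((Matrix.J (Fin g) ℤ *ᵥ u) ⬝ᵥ v) * u i := by
  rw [Matrix.add_mulVec, Matrix.one_mulVec, Matrix.smul_mulVec, vecMulVec_mulVec]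
  funext i
  simp only [Pi.add_apply, Pi.smul_apply, smul_eq_mul]
  ring

lemma reach_transvect (u : V g) (c : ℤ) (v : V g) :
    Reach v (fun i => v i + c * ((Matrix.J (Fin g) ℤ *ᵥ u) ⬝ᵥ v) * u i) :=
  ⟨_, transvection_mem u c, transvection_mulVec u c v⟩

lemma J_dot (u v : V g) :
    (Matrix.J (Fin g) ℤ *ᵥ u) ⬝ᵥ v
      = (∑ k : Fin g, u (Sum.inl k) * v (Sum.inr k))
        - ∑ k : Fin g, u (Sum.inr k) * v (Sum.inl k) := by
  have hl : ∀ i, (Matrix.J (Fin g) ℤ *ᵥ u) (Sum.inl i) = -u (Sum.inr i) := by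
    intro i
    simp [Matrix.mulVec, dotProduct, Fintype.sum_sum_type, Matrix.J, Matrix.one_apply,
      Finset.sum_ite_eq]
  have hr : ∀ i, (Matrix.J (Fin g) ℤ *ᵥ u) (Sum.inr i) = u (Sum.inl i) := by
    intro i
    simp [Matrix.mulVec, dotProduct, Fintype.sum_sum_type, Matrix.J, Matrix.one_apply,
      Finset.sum_ite_eq]
  rw [dotProduct, Fintype.sum_sum_type]
  simp only [hl, hr]
  rw [sub_eq_add_neg, add_comm, ← Finset.sum_neg_distrib]
  congr 1 <;> exact Finset.sum_congr rfl fun _ _ => by ring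


lemma move1 (k : Fin g) (c : ℤ) (v : V g) :
    Reach v (Function.update v (Sum.inl k) (v (Sum.inl k) + c * v (Sum.inr k))) := by
  have h := reach_transvect (Pi.single (Sum.inl k) 1) c v
  have hd : (Matrix.J (Fin g) ℤ *ᵥ (Pi.single (Sum.inl k) 1 : V g)) ⬝ᵥ v = v (Sum.inr k) := by
    rw [J_dot]; simp [Pi.single_apply]
  rw [hd] at h
  convert h using 1
  funext i
  by_cases hi : i = Sum.inl k
  · subst hi; simp
  · simp [Function.update_of_ne hi, Pi.single_eq_of_ne hi]

lemma move2 (k : Fin g) (c : ℤ) (v : V g) :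
    Reach v (Function.update v (Sum.inr k) (v (Sum.inr k) + c * v (Sum.inl k))) := by
  have h := reach_transvect (Pi.single (Sum.inr k) 1) (-c) v
  have hd : (Matrix.J (Fin g) ℤ *ᵥ (Pi.single (Sum.inr k) 1 : V g)) ⬝ᵥ v = -v (Sum.inl k) := by
    rw [J_dot]; simp [Pi.single_apply]
  rw [hd] at h
  convert h using 1
  funext i
  by_cases hi : i = Sum.inr k
  · subst hi; simp
  · simp [Function.update_of_ne hi, Pi.single_eq_of_ne hi]

lemma moveC (a b : Fin g) (hab : a ≠ b) (c : ℤ) (v : V g) :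
    Reach v (Function.update
      (Function.update v (Sum.inl a) (v (Sum.inl a) + c * (v (Sum.inr a) - v (Sum.inl b))))
      (Sum.inr b) (v (Sum.inr b) + c * (v (Sum.inr a) - v (Sum.inl b)))) := by
  set u : V g := Pi.single (Sum.inl a) 1 + Pi.single (Sum.inr b) 1 with hu
  have h := reach_transvect u c v
  have hd : (Matrix.J (Fin g) ℤ *ᵥ u) ⬝ᵥ v = v (Sum.inr a) - v (Sum.inl b) := by
    rw [J_dot]; simp [hu, Pi.single_apply, Finset.sum_add_distrib]
  rw [hd] at h
  convert h using 1
  funext i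
  have hab' : Sum.inr b ≠ Sum.inl a := by simp
  by_cases hi : i = Sum.inr b
  · subst hi
    simp [hu, Function.update_self, Function.update_of_ne hab', Pi.single_eq_of_ne hab']
  · rw [Function.update_of_ne hi]
    by_cases hi2 : i = Sum.inl a
    · subst hi2; simp [hu, Pi.single_eq_of_ne (Ne.symm (Ne.intro hab'.symm))]
    · rw [Function.update_of_ne hi2]
      simp [hu, Pi.single_eq_of_ne hi2, Pi.single_eq_of_ne hi]

lemma moveE (a b : Fin g) (hab : a ≠ b) (c : ℤ) (v : V g) :
    Reach v (Function.update
      (Function.update v (Sum.inr a) (v (Sum.inr a) + c * (v (Sum.inl a) + v (Sum.inl b))))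
      (Sum.inr b) (v (Sum.inr b) + c * (v (Sum.inl a) + v (Sum.inl b)))) := by
  set u : V g := Pi.single (Sum.inr a) 1 + Pi.single (Sum.inr b) 1 with hu
  have h := reach_transvect u (-c) v
  have hd : (Matrix.J (Fin g) ℤ *ᵥ u) ⬝ᵥ v = -(v (Sum.inl a) + v (Sum.inl b)) := by
    rw [J_dot]; simp [hu, Pi.single_apply, add_mul, Finset.sum_add_distrib]
  rw [hd] at h
  convert h using 1
  funext i
  have hba : (Sum.inr b : Fin g ⊕ Fin g) ≠ Sum.inr a := by simp [Ne.symm hab]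
  by_cases hi : i = Sum.inr b
  · subst hi
    rw [Function.update_self]
    simp [hu, Pi.single_eq_of_ne hba]
    ring
  · rw [Function.update_of_ne hi]
    by_cases hi2 : i = Sum.inr a
    · subst hi2
      rw [Function.update_self]
      simp [hu, Pi.single_eq_of_ne (Ne.symm hba)]
      ring
    · rw [Function.update_of_ne hi2]
      simp [hu, Pi.single_eq_of_ne hi2, Pi.single_eq_of_ne hi]


lemma natAbs_emod_lt (x y : ℤ) (hy : y ≠ 0) : (x % y).natAbs < y.natAbs := by
  have h1 : 0 ≤ x % y := Int.emod_nonneg x hy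
  rcases lt_or_gt_of_ne hy with h | h
  · have h2 : x % y < -y := by
      have := Int.emod_lt_of_pos x (show (0:ℤ) < -y by omega)
      rwa [Int.emod_neg] at this
    omega
  · have h2 := Int.emod_lt_of_pos x h
    omega

lemma pair_reduce (k : Fin g) : ∀ (n : ℕ) (v : V g), (v (Sum.inr k)).natAbs ≤ n →
    ∃ w : V g, Reach v w ∧ w (Sum.inr k) = 0 ∧
      ∀ i, i ≠ Sum.inl k → i ≠ Sum.inr k → w i = v i := by
  intro n
  induction n with
  | zero =>
    intro v h
    have h0 : v (Sum.inr k) = 0 := by omega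
    exact ⟨v, Reach.rfl v, h0, fun _ _ _ => rfl⟩
  | succ n ih =>
    intro v h
    by_cases h0 : v (Sum.inr k) = 0
    · exact ⟨v, Reach.rfl v, h0, fun _ _ _ => rfl⟩
    · have r1 := move1 k (-(v (Sum.inl k) / v (Sum.inr k))) v
      set v1 := Function.update v (Sum.inl k)
        (v (Sum.inl k) + -(v (Sum.inl k) / v (Sum.inr k)) * v (Sum.inr k)) with hv1
      have r2 := move1 k 1 v1
      set v2 := Function.update v1 (Sum.inl k) (v1 (Sum.inl k) + 1 * v1 (Sum.inr k)) with hv2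
      have r3 := move2 k (-1) v2
      set v3 := Function.update v2 (Sum.inr k) (v2 (Sum.inr k) + -1 * v2 (Sum.inl k)) with hv3
      have r4 := move1 k 1 v3
      set v4 := Function.update v3 (Sum.inl k) (v3 (Sum.inl k) + 1 * v3 (Sum.inr k)) with hv4
      have e1l : v1 (Sum.inl k) = v (Sum.inl k) % v (Sum.inr k) := by
        rw [hv1, Function.update_self, Int.emod_def]; ring
      have e1r : v1 (Sum.inr k) = v (Sum.inr k) := by
        rw [hv1]; exact Function.update_of_ne (by simp) _ _
      have e4r : v4 (Sum.inr k) = -(v (Sum.inl k) % v (Sum.inr k)) := by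
        simp only [hv4, hv3, hv2, Function.update_apply, reduceCtorEq, if_false, if_true,
          if_pos rfl, e1l, e1r]
        simp [e1l, e1r]
        try ring
      have hm : (v4 (Sum.inr k)).natAbs ≤ n := by
        rw [e4r]
        have := natAbs_emod_lt (v (Sum.inl k)) (v (Sum.inr k)) h0
        omega
      obtain ⟨w, rw_, hw0, hwp⟩ := ih v4 hm
      refine ⟨w, r1.trans (r2.trans (r3.trans (r4.trans rw_))), hw0, ?_⟩
      intro i hi1 hi2
      rw [hwp i hi1 hi2]
      simp [hv4, hv3, hv2, hv1, Function.update_apply, hi1, hi2]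

lemma cross_reduce (a b : Fin g) (hab : a ≠ b) : ∀ (n : ℕ) (v : V g),
    (v (Sum.inl b)).natAbs ≤ n → v (Sum.inr a) = 0 → v (Sum.inr b) = 0 →
    ∃ w : V g, Reach v w ∧ w (Sum.inl b) = 0 ∧ w (Sum.inr a) = 0 ∧ w (Sum.inr b) = 0 ∧
      ∀ i, i ≠ Sum.inl a → i ≠ Sum.inr a → i ≠ Sum.inl b → i ≠ Sum.inr b → w i = v i := by
  have hba : b ≠ a := Ne.symm hab
  intro n
  induction n with
  | zero =>
    intro v h ha0 hb0
    have h0 : v (Sum.inl b) = 0 := by omega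
    exact ⟨v, Reach.rfl v, h0, ha0, hb0, fun _ _ _ _ _ => rfl⟩
  | succ n ih =>
    intro v h ha0 hb0
    by_cases h0 : v (Sum.inl b) = 0
    · exact ⟨v, Reach.rfl v, h0, ha0, hb0, fun _ _ _ _ _ => rfl⟩
    · -- step 1 : reduce x_a mod x_b
      have r1 := moveC a b hab (v (Sum.inl a) / v (Sum.inl b)) v
      set v1 := Function.update
        (Function.update v (Sum.inl a)
          (v (Sum.inl a) + v (Sum.inl a) / v (Sum.inl b) * (v (Sum.inr a) - v (Sum.inl b))))
        (Sum.inr b)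
        (v (Sum.inr b) + v (Sum.inl a) / v (Sum.inl b) * (v (Sum.inr a) - v (Sum.inl b)))
        with hv1
      have r2 := move2 b (v (Sum.inl a) / v (Sum.inl b)) v1
      set v2 := Function.update v1 (Sum.inr b)
        (v1 (Sum.inr b) + v (Sum.inl a) / v (Sum.inl b) * v1 (Sum.inl b)) with hv2
      have e2la : v2 (Sum.inl a) = v (Sum.inl a) % v (Sum.inl b) := by
        simp only [hv2, hv1, Function.update_apply, reduceCtorEq, if_false, ha0]
        simp [hab, hba]
        rw [Int.emod_def]; ring
      have e2ra : v2 (Sum.inr a) = 0 := by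
        simp [hv2, hv1, Function.update_apply, hab, hba, ha0, hb0]
      have e2lb : v2 (Sum.inl b) = v (Sum.inl b) := by
        simp [hv2, hv1, Function.update_apply, hab, hba]
      have e2rb : v2 (Sum.inr b) = 0 := by
        simp only [hv2, hv1, Function.update_apply, reduceCtorEq, if_false, if_pos rfl]
        simp [hab, hba, ha0, hb0]
        try ring
      have e2p : ∀ i, i ≠ Sum.inl a → i ≠ Sum.inr a → i ≠ Sum.inl b → i ≠ Sum.inr b →
          v2 i = v i := by
        intro i hi1 hi2 hi3 hi4
        simp [hv2, hv1, Function.update_apply, hi1, hi4]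
      by_cases hA : v2 (Sum.inl a) = 0
      · -- transfer x_b into slot x_a, finishing
        have t1 := moveC a b hab (-1) v2
        set u1 := Function.update
          (Function.update v2 (Sum.inl a)
            (v2 (Sum.inl a) + -1 * (v2 (Sum.inr a) - v2 (Sum.inl b))))
          (Sum.inr b)
          (v2 (Sum.inr b) + -1 * (v2 (Sum.inr a) - v2 (Sum.inl b))) with hu1
        have t2 := move1 b (-1) u1
        set u2 := Function.update u1 (Sum.inl b)
          (u1 (Sum.inl b) + -1 * u1 (Sum.inr b)) with hu2
        have t3 := moveE a b hab (-1) u2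
        set u3 := Function.update
          (Function.update u2 (Sum.inr a)
            (u2 (Sum.inr a) + -1 * (u2 (Sum.inl a) + u2 (Sum.inl b))))
          (Sum.inr b)
          (u2 (Sum.inr b) + -1 * (u2 (Sum.inl a) + u2 (Sum.inl b))) with hu3
        have t4 := move2 a 1 u3
        set u4 := Function.update u3 (Sum.inr a)
          (u3 (Sum.inr a) + 1 * u3 (Sum.inl a)) with hu4
        have eu1la : u1 (Sum.inl a) = v (Sum.inl b) := by
          simp [hu1, Function.update_apply, hab, hba, hab, hA, e2ra, e2lb]
        have eu1rb : u1 (Sum.inr b) = v (Sum.inl b) := by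
          simp [hu1, Function.update_apply, hab, hba, hA, e2ra, e2lb, e2rb]
        have eu1lb : u1 (Sum.inl b) = v (Sum.inl b) := by
          simp [hu1, Function.update_apply, hab, hba, hba, e2lb]
        have eu1ra : u1 (Sum.inr a) = 0 := by
          simp [hu1, Function.update_apply, hab, hba, hba, e2ra]
        have eu2lb : u2 (Sum.inl b) = 0 := by
          simp [hu2, Function.update_apply, hab, hba, eu1lb, eu1rb]
        have eu2la : u2 (Sum.inl a) = v (Sum.inl b) := by
          simp [hu2, Function.update_apply, hab, hba, hab, eu1la]
        have eu2ra : u2 (Sum.inr a) = 0 := by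
          simp [hu2, Function.update_apply, hab, hba, eu1ra]
        have eu2rb : u2 (Sum.inr b) = v (Sum.inl b) := by
          simp [hu2, Function.update_apply, hab, hba, eu1rb]
        have eu3ra : u3 (Sum.inr a) = -v (Sum.inl b) := by
          simp [hu3, Function.update_apply, hab, hba, hba, eu2ra, eu2la, eu2lb]
        have eu3rb : u3 (Sum.inr b) = 0 := by
          simp [hu3, Function.update_apply, hab, hba, eu2rb, eu2la, eu2lb]
        have eu3la : u3 (Sum.inl a) = v (Sum.inl b) := by
          simp [hu3, Function.update_apply, hab, hba, eu2la]
        have eu3lb : u3 (Sum.inl b) = 0 := by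
          simp [hu3, Function.update_apply, hab, hba, eu2lb]
        have eu4ra : u4 (Sum.inr a) = 0 := by
          simp [hu4, Function.update_apply, hab, hba, eu3ra, eu3la]
        have eu4rb : u4 (Sum.inr b) = 0 := by
          simp [hu4, Function.update_apply, hab, hba, hba, eu3rb]
        have eu4lb : u4 (Sum.inl b) = 0 := by
          simp [hu4, Function.update_apply, hab, hba, eu3lb]
        refine ⟨u4, r1.trans (r2.trans (t1.trans (t2.trans (t3.trans t4)))), eu4lb, eu4ra,
          eu4rb, ?_⟩
        intro i hi1 hi2 hi3 hi4
        rw [hu4, Function.update_of_ne hi2, hu3, Function.update_of_ne hi4,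
          Function.update_of_ne hi2, hu2, Function.update_of_ne hi3, hu1,
          Function.update_of_ne hi4, Function.update_of_ne hi1]
        exact e2p i hi1 hi2 hi3 hi4
      · -- step 2 : reduce x_b mod x_a, recurse
        have r3 := moveC b a hba (v2 (Sum.inl b) / v2 (Sum.inl a)) v2
        set v3 := Function.update
          (Function.update v2 (Sum.inl b)
            (v2 (Sum.inl b) + v2 (Sum.inl b) / v2 (Sum.inl a) * (v2 (Sum.inr b) - v2 (Sum.inl a))))
          (Sum.inr a)
          (v2 (Sum.inr a) + v2 (Sum.inl b) / v2 (Sum.inl a) * (v2 (Sum.inr b) - v2 (Sum.inl a)))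
          with hv3
        have r4 := move2 a (v2 (Sum.inl b) / v2 (Sum.inl a)) v3
        set v4 := Function.update v3 (Sum.inr a)
          (v3 (Sum.inr a) + v2 (Sum.inl b) / v2 (Sum.inl a) * v3 (Sum.inl a)) with hv4
        have e4lb : v4 (Sum.inl b) = v2 (Sum.inl b) % v2 (Sum.inl a) := by
          simp only [hv4, hv3, Function.update_apply, reduceCtorEq, if_false, e2rb]
          simp [hab, hba, e2rb]
          rw [Int.emod_def]; ring
        have e4la : v4 (Sum.inl a) = v2 (Sum.inl a) := by
          simp [hv4, hv3, Function.update_apply, hab, hba]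
        have e4ra : v4 (Sum.inr a) = 0 := by
          simp only [hv4, hv3, Function.update_apply, reduceCtorEq, if_false, if_pos rfl]
          simp [hab, hba, e2ra, e2rb]
          try ring
        have e4rb : v4 (Sum.inr b) = 0 := by
          simp [hv4, hv3, Function.update_apply, hab, hba, e2rb]
        have e4p : ∀ i, i ≠ Sum.inl a → i ≠ Sum.inr a → i ≠ Sum.inl b → i ≠ Sum.inr b →
            v4 i = v2 i := by
          intro i hi1 hi2 hi3 hi4
          simp [hv4, hv3, Function.update_apply, hi2, hi3]
        have hm : (v4 (Sum.inl b)).natAbs ≤ n := by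
          rw [e4lb]
          have hlt1 := natAbs_emod_lt (v2 (Sum.inl b)) (v2 (Sum.inl a)) hA
          have hlt2 : (v2 (Sum.inl a)).natAbs < (v (Sum.inl b)).natAbs := by
            rw [e2la]; exact natAbs_emod_lt _ _ h0
          omega
        obtain ⟨w, rw_, hwb, hwra, hwrb, hwp⟩ := ih v4 hm e4ra e4rb
        refine ⟨w, r1.trans (r2.trans (r3.trans (r4.trans rw_))), hwb, hwra, hwrb, ?_⟩
        intro i hi1 hi2 hi3 hi4
        rw [hwp i hi1 hi2 hi3 hi4, e4p i hi1 hi2 hi3 hi4]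
        exact e2p i hi1 hi2 hi3 hi4


lemma phase1 (s : Finset (Fin g)) : ∀ v : V g,
    ∃ w : V g, Reach v w ∧ (∀ k ∈ s, w (Sum.inr k) = 0) ∧
      ∀ i, (∀ k ∈ s, i ≠ Sum.inl k ∧ i ≠ Sum.inr k) → w i = v i := by
  induction s using Finset.induction_on with
  | empty => exact fun v => ⟨v, Reach.rfl v, by simp, fun _ _ => rfl⟩
  | @insert k s hk ih =>
    intro v
    obtain ⟨v1, r1, h10, h1p⟩ := pair_reduce k (v (Sum.inr k)).natAbs v le_rfl
    obtain ⟨w, r2, h20, h2p⟩ := ih v1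
    refine ⟨w, r1.trans r2, ?_, ?_⟩
    · intro j hj
      rcases Finset.mem_insert.mp hj with rfl | hj
      · rw [h2p _ (fun k' hk' => ⟨by simp, by
          simp only [ne_eq, Sum.inr.injEq]
          exact fun hkk => hk (hkk ▸ hk')⟩)]
        exact h10
      · exact h20 j hj
    · intro i hi
      have hik := hi k (Finset.mem_insert_self k s)
      rw [h2p i (fun k' hk' => hi k' (Finset.mem_insert_of_mem hk')), h1p i hik.1 hik.2]

lemma phase2 (a : Fin g) (s : Finset (Fin g)) : ∀ v : V g, (∀ k, v (Sum.inr k) = 0) →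
    ∃ w : V g, Reach v w ∧ (∀ k, w (Sum.inr k) = 0) ∧
      (∀ k ∈ s, k ≠ a → w (Sum.inl k) = 0) ∧
      ∀ k, k ∉ s → k ≠ a → w (Sum.inl k) = v (Sum.inl k) := by
  induction s using Finset.induction_on with
  | empty => exact fun v hz => ⟨v, Reach.rfl v, hz, by simp, fun _ _ _ => rfl⟩
  | @insert k s hk ih =>
    intro v hz
    by_cases hka : k = a
    · obtain ⟨w, r, hz', hs', hp'⟩ := ih v hz
      refine ⟨w, r, hz', ?_, ?_⟩
      · intro j hj hja
        rcases Finset.mem_insert.mp hj with rfl | hjs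
        · exact absurd hka (hka ▸ hja)
        · exact hs' j hjs hja
      · exact fun j hj hja => hp' j (fun h => hj (Finset.mem_insert_of_mem h)) hja
    · have hak : a ≠ k := fun h => hka h.symm
      obtain ⟨v1, r1, h1b0, h1ra, h1rb, h1p⟩ :=
        cross_reduce a k hak (v (Sum.inl k)).natAbs v le_rfl (hz a) (hz k)
      have hz1 : ∀ j, v1 (Sum.inr j) = 0 := by
        intro j
        by_cases hja : j = a
        · exact hja ▸ h1ra
        · by_cases hjk : j = k
          · exact hjk ▸ h1rb
          · rw [h1p (Sum.inr j) (by simp) (by simp [hja]) (by simp) (by simp [hjk])]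
            exact hz j
      obtain ⟨w, r2, hz2, hs2, hp2⟩ := ih v1 hz1
      refine ⟨w, r1.trans r2, hz2, ?_, ?_⟩
      · intro j hj hja
        rcases Finset.mem_insert.mp hj with rfl | hjs
        · rw [hp2 j hk hja]; exact h1b0
        · exact hs2 j hjs hja
      · intro j hj hja
        have hjk : j ≠ k := fun h => hj (h ▸ Finset.mem_insert_self k s)
        rw [hp2 j (fun h => hj (Finset.mem_insert_of_mem h)) hja]
        rw [h1p (Sum.inl j) (by simp [hja]) (by simp) (by simp [hjk]) (by simp)]

lemma reach_single (a : Fin g) (v : V g)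
    (hv : ∀ t : ℤ, (∀ i, t ∣ v i) → IsUnit t) :
    Reach v (Pi.single (Sum.inl a) 1) := by
  obtain ⟨v1, r1, h1, -⟩ := phase1 Finset.univ v
  have hz1 : ∀ k, v1 (Sum.inr k) = 0 := fun k => h1 k (Finset.mem_univ k)
  obtain ⟨v2, r2, hz2, hs2, -⟩ := phase2 a Finset.univ v1 hz1
  set t := v2 (Sum.inl a) with ht
  have hform : ∀ i, v2 i = if i = Sum.inl a then t else 0 := by
    intro i
    rcases i with k | k
    · by_cases hk : k = a
      · subst hk; simp [ht]
      · simp [hk, hs2 k (Finset.mem_univ k) hk]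
    · simp [hz2 k]
  have rv : Reach v2 v := (r1.trans r2).symm
  obtain ⟨M, hM, hMv⟩ := rv
  have hdvd : ∀ i, t ∣ v i := by
    intro i
    rw [← hMv]
    show t ∣ ∑ j, M i j * v2 j
    refine Finset.dvd_sum fun j _ => ?_
    rw [hform j]
    by_cases hj : j = Sum.inl a
    · simp only [hj, if_pos rfl]
      exact dvd_mul_left t (M i (Sum.inl a))
    · simp [hj]
  have hunit := hv t hdvd
  rw [Int.isUnit_iff] at hunit
  have hr12 : Reach v v2 := r1.trans r2
  rcases hunit with h1' | h1'
  · have hv2 : v2 = Pi.single (Sum.inl a) 1 := by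
      funext i
      rw [hform i]
      by_cases hi : i = Sum.inl a
      · subst hi; simp [h1']
      · simp [hi, Pi.single_eq_of_ne hi]
    exact hv2 ▸ hr12
  · have n1 := move2 a 1 v2
    set u1 := Function.update v2 (Sum.inr a) (v2 (Sum.inr a) + 1 * v2 (Sum.inl a)) with hu1
    have n2 := move1 a (-2) u1
    set u2 := Function.update u1 (Sum.inl a) (u1 (Sum.inl a) + -2 * u1 (Sum.inr a)) with hu2
    have n3 := move2 a 1 u2
    set u3 := Function.update u2 (Sum.inr a) (u2 (Sum.inr a) + 1 * u2 (Sum.inl a)) with hu3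
    have hend : u3 = Pi.single (Sum.inl a) 1 := by
      funext i
      by_cases hi : i = Sum.inl a
      · subst hi
        simp [hu3, hu2, hu1, Function.update_apply, hform, h1']
      · by_cases hi2 : i = Sum.inr a
        · subst hi2
          simp [hu3, hu2, hu1, Function.update_apply, hform, h1',
            Pi.single_eq_of_ne (by simp : (Sum.inr a : Fin g ⊕ Fin g) ≠ Sum.inl a)]
        · simp [hu3, hu2, hu1, Function.update_apply, hi, hi2, hform,
            Pi.single_eq_of_ne hi]
    exact hend ▸ (hr12.trans (n1.trans (n2.trans n3)))

end SympAux

theorem symplectic_transitive_on_primitive (g : ℕ) (hg : 1 ≤ g)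
    (v : (Fin g ⊕ Fin g) → ℤ) (hv : v ≠ 0)
    (hprim : Finset.univ.gcd v = 1) :
    ∃ A : Matrix (Fin g ⊕ Fin g) (Fin g ⊕ Fin g) ℤ,
      A ∈ Matrix.symplecticGroup (Fin g) ℤ ∧ A.mulVec v = fun _ => 1 := by
  classical
  set a : Fin g := ⟨0, hg⟩ with ha
  have h1 : SympAux.Reach v (Pi.single (Sum.inl a) 1) := by
    refine SympAux.reach_single a v fun t ht => isUnit_of_dvd_one ?_
    have := Finset.dvd_gcd (fun i (_ : i ∈ Finset.univ) => ht i)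
    rwa [hprim] at this
  have h2 : SympAux.Reach (fun _ => (1 : ℤ)) (Pi.single (Sum.inl a) 1) :=
    SympAux.reach_single a _ fun t ht => isUnit_of_dvd_one (ht (Sum.inl a))
  obtain ⟨M, hM, hMv⟩ := h1.trans h2.symm
  exact ⟨M, hM, hMv⟩
end

section
/- Let d_1 ≥ d_2 ≥ ... ≥ d_k be positive integers and p_1, ..., p_n integers with p_i ≥ 2, satisfying Σ d_j = Σ p_i + 2g - 2 and d_j ≤ Σ p_i - n - 1 for all j, where g ≥ 1 and n ≥ 1. Define a reduction on a non-increasing tuple of positive integers: replace the last two entries (a, b) by (a-1, b-1), deleting entries that become 0 (if the tuple has one entry e, replace by (e-1), deleting if 0). Then g successive reductions can be applied to (d_1, ..., d_k) without the tuple ever becoming empty or a singleton before completing all g reductions, and the resulting tuple (d_1, ..., d_{l-2}, d'_{l-1}, d'_l) has sum Σ p_i - 2. -/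
/-- One reduction step on a tuple of positive integers, represented as a list in
*non-decreasing* order (the reverse of the non-increasing tuple): decrease the
first two entries (the last two entries of the tuple) by one and delete any
entry that becomes zero. -/
def redStep : List ℕ → List ℕ
  | [] => []
  | [a] => [a - 1].filter (fun x => x ≠ 0)
  | a :: b :: r => ((a - 1) :: (b - 1) :: r).filter (fun x => x ≠ 0)

lemma filter_ne_zero_sum (l : List ℕ) : (l.filter (fun x => x ≠ 0)).sum = l.sum := by
  induction l with
  | nil => simp
  | cons a t ih =>
    simp only [ne_eq, decide_not] at ih ⊢
    by_cases h : a = 0 <;> simp [List.filter_cons, h, ih]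

lemma redStep_sum (l : List ℕ) (hl : 2 ≤ l.length) (hp : ∀ x ∈ l, 0 < x) :
    (redStep l).sum + 2 = l.sum := by
  match l with
  | [] => simp at hl
  | [a] => simp at hl
  | a :: b :: r =>
    have ha : 0 < a := hp a (by simp)
    have hb : 0 < b := hp b (by simp)
    simp only [redStep, filter_ne_zero_sum, List.sum_cons]
    omega

lemma redStep_pos (l : List ℕ) : ∀ x ∈ redStep l, 0 < x := by
  intro x hx
  match l with
  | [] => simp [redStep] at hx
  | [a] =>
    simp only [redStep, List.mem_filter, decide_eq_true_eq] at hx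
    exact Nat.pos_of_ne_zero hx.2
  | a :: b :: r =>
    simp only [redStep, List.mem_filter, decide_eq_true_eq] at hx
    exact Nat.pos_of_ne_zero hx.2

lemma redStep_le (l : List ℕ) : ∀ x ∈ redStep l, ∃ y ∈ l, x ≤ y := by
  intro x hx
  match l with
  | [] => simp [redStep] at hx
  | [a] =>
    simp only [redStep, List.mem_filter, List.mem_singleton, decide_eq_true_eq] at hx
    exact ⟨a, by simp, by omega⟩
  | a :: b :: r =>
    simp only [redStep, List.mem_filter, List.mem_cons, decide_eq_true_eq] at hx
    rcases hx.1 with h | h | h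
    · exact ⟨a, by simp, by omega⟩
    · exact ⟨b, by simp, by omega⟩
    · exact ⟨x, by simp [h], le_rfl⟩

theorem reductions_possible (g n : ℕ) (hg : 1 ≤ g) (hn : 1 ≤ n)
    (p : Fin n → ℕ) (hp : ∀ i, 2 ≤ p i)
    (d : List ℕ) (hpos : ∀ x ∈ d, 0 < x) (hsorted : d.Pairwise (· ≤ ·))
    (hsum : (d.sum : ℤ) = (∑ i, (p i : ℤ)) + 2 * g - 2)
    (hord : ∀ x ∈ d, (x : ℤ) ≤ (∑ i, (p i : ℤ)) - n - 1) :
    (∀ h < g, 2 ≤ (redStep^[h] d).length) ∧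
      ((redStep^[g] d).sum : ℤ) = (∑ i, (p i : ℤ)) - 2 := by
  set S : ℤ := ∑ i, (p i : ℤ) with hS
  have hn' : (1 : ℤ) ≤ (n : ℤ) := by exact_mod_cast hn
  have hg' : (1 : ℤ) ≤ (g : ℤ) := by exact_mod_cast hg
  have hS2 : (2 : ℤ) ≤ S := by
    have h1 : ∑ _i : Fin n, (2 : ℤ) ≤ S := by
      apply Finset.sum_le_sum
      intro i _
      exact_mod_cast hp i
    simp at h1
    nlinarith
  -- helper: length ≥ 2 whenever h < g
  have hlen_of : ∀ (L : List ℕ) (h : ℕ), h < g →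
      ((L.sum : ℤ) + 2 * h = (d.sum : ℤ)) →
      (∀ x ∈ L, (x : ℤ) ≤ S - n - 1) → 2 ≤ L.length := by
    intro L h hhg hLs hLb
    have hh' : (h : ℤ) + 1 ≤ (g : ℤ) := by exact_mod_cast hhg
    match L with
    | [] =>
      exfalso
      simp only [List.sum_nil, Nat.cast_zero, zero_add] at hLs
      linarith
    | [e] =>
      exfalso
      rw [show ([e] : List ℕ).sum = e by simp] at hLs
      have he := hLb e (by simp)
      have he' : (([e] : List ℕ).sum : ℤ) = (e : ℤ) := by simp
      linarith
    | a :: b :: r => simp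
  -- main invariant
  have key : ∀ h, h ≤ g →
      ((redStep^[h] d).sum : ℤ) + 2 * h = (d.sum : ℤ) ∧
      (∀ x ∈ redStep^[h] d, 0 < x ∧ (x : ℤ) ≤ S - n - 1) := by
    intro h
    induction h with
    | zero =>
      intro _
      exact ⟨by simp, fun x hx => by
        simp only [Function.iterate_zero, id_eq] at hx
        exact ⟨hpos x hx, hord x hx⟩⟩
    | succ h ih =>
      intro hh
      obtain ⟨hsumh, hmem⟩ := ih (Nat.le_of_succ_le hh)
      have hlen : 2 ≤ (redStep^[h] d).length :=
        hlen_of _ h (Nat.lt_of_succ_le hh) hsumh (fun x hx => (hmem x hx).2)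
      have hit : redStep^[h + 1] d = redStep (redStep^[h] d) :=
        Function.iterate_succ_apply' _ _ _
    -- sum
      have hstep := redStep_sum (redStep^[h] d) hlen (fun x hx => (hmem x hx).1)
      constructor
      · rw [hit]
        have : ((redStep (redStep^[h] d)).sum : ℤ) + 2 = ((redStep^[h] d).sum : ℤ) := by
          exact_mod_cast congrArg (Nat.cast : ℕ → ℤ) hstep
        have hc : ((h + 1 : ℕ) : ℤ) = (h : ℤ) + 1 := by push_cast; ring
        rw [hc]
        linarith
      · intro x hx
        rw [hit] at hx
        refine ⟨redStep_pos _ x hx, ?_⟩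
        obtain ⟨y, hy, hxy⟩ := redStep_le _ x hx
        have := (hmem y hy).2
        have hxy' : (x : ℤ) ≤ (y : ℤ) := by exact_mod_cast hxy
        linarith
  constructor
  · intro h hh
    obtain ⟨h1, h2⟩ := key h hh.le
    exact hlen_of _ h hh h1 (fun x hx => (h2 x hx).2)
  · have := (key g le_rfl).1
    linarith
end
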